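/- Let k and n be integers with 0 ≤ k ≤ n. In the graph consisting of a clique on n vertices where exactly k specified clique vertices additionally have a private pendant neighbor, a maximum matching has size k + ⌊(n−k)/2⌋. -/

import Mathlib

open SimpleGraph

lemma aux_card {V : Type*} [Fintype V] {G : SimpleGraph V} {M : G.Subgraph}
    (h : M.IsMatching) : M.verts.ncard = 2 * M.edgeSet.ncard := by
  classical
  haveI : Fintype M.verts := M.verts.toFinite.fintype
  haveI : DecidableRel M.coe.Adj := Classical.decRel _
  have hdeg : ∀ v : M.verts, M.coe.degree v = 1 := by
    intro v
    rw [M.coe_degree]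
    rw [Subgraph.degree_eq_one_iff_existsUnique_adj]
    exact h v.2
  have hsum := M.coe.sum_degrees_eq_twice_card_edges
  rw [Finset.sum_congr rfl (g := fun _ => 1) (fun v _ => by convert hdeg v)] at hsum
  simp only [Finset.sum_const, smul_eq_mul, mul_one, Finset.card_univ] at hsum
  have h1 : M.verts.ncard = Fintype.card M.verts := by
    rw [Set.ncard_eq_toFinset_card', Set.toFinset_card]
  have h2 : M.edgeSet.ncard = M.coe.edgeFinset.card := by
    rw [← M.image_coe_edgeSet_coe,
      Set.ncard_image_of_injective _ (Sym2.map.injective Subtype.val_injective),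
      Set.ncard_eq_toFinset_card', edgeFinset]
  rw [h1, h2, ← hsum]



/-- A clique on `n` vertices (`.inl a`, pairwise adjacent) in which the `k`
specified clique vertices `f 0, …, f (k-1)` (with `f` injective) each have a
private pendant neighbor (`.inr j` adjacent only to `.inl (f j)`). -/
def cliquePendant (n k : ℕ) (f : Fin k → Fin n) : SimpleGraph (Fin n ⊕ Fin k) :=
  SimpleGraph.fromRel (fun x y =>
    (∃ a b : Fin n, a ≠ b ∧ x = Sum.inl a ∧ y = Sum.inl b) ∨
    (∃ j : Fin k, x = Sum.inl (f j) ∧ y = Sum.inr j))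

/-- A maximum matching of this graph has size `k + ⌊(n−k)/2⌋`. -/
theorem stmt16 (n k : ℕ) (hkn : k ≤ n) (f : Fin k → Fin n)
    (hf : Function.Injective f) :
    IsGreatest {m : ℕ | ∃ M : (cliquePendant n k f).Subgraph,
        M.IsMatching ∧ M.edgeSet.ncard = m} (k + (n - k) / 2) := by
  classical
  constructor
  · -- construct a matching of the right size
    set c : Finset (Fin n) := (Finset.univ.image f)ᶜ with hcdef
    have hc : c.card = n - k := by
      simp [hcdef, Finset.card_compl, Finset.card_image_of_injective _ hf]
    set g : Fin (n - k) → Fin n := fun i => (c.orderIsoOfFin hc i : Fin n) with hgdef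
    have hg_inj : Function.Injective g := fun a b hab =>
      (c.orderIsoOfFin hc).injective (Subtype.val_injective hab)
    have hg_not : ∀ (j : Fin k) (i : Fin (n - k)), f j ≠ g i := by
      intro j i h
      have h2 : g i ∈ Finset.image f Finset.univ :=
        h ▸ Finset.mem_image_of_mem f (Finset.mem_univ j)
      exact Finset.mem_compl.mp (c.orderIsoOfFin hc i).2 h2
    set p0 : Fin ((n - k) / 2) → Fin n :=
      fun i => g ⟨2 * i.val, by have := i.isLt; omega⟩ with hp0def
    set p1 : Fin ((n - k) / 2) → Fin n :=
      fun i => g ⟨2 * i.val + 1, by have := i.isLt; omega⟩ with hp1def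
    have hp00 : Function.Injective p0 := by
      intro a b h
      have := hg_inj h
      have := Fin.mk.injEq .. ▸ this
      exact Fin.ext (by omega)
    have hp11 : Function.Injective p1 := by
      intro a b h
      have := hg_inj h
      simp only [Fin.mk.injEq] at this
      exact Fin.ext (by omega)
    have hp01 : ∀ i j, p0 i ≠ p1 j := by
      intro i j h
      have := hg_inj h
      simp only [Fin.mk.injEq] at this
      omega
    have hfp0 : ∀ (j : Fin k) i, f j ≠ p0 i := fun j i => hg_not j _
    have hfp1 : ∀ (j : Fin k) i, f j ≠ p1 i := fun j i => hg_not j _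
    let M : (cliquePendant n k f).Subgraph :=
      { verts := Set.range (fun j => Sum.inl (f j)) ∪ Set.range Sum.inr ∪
          Set.range (fun i => Sum.inl (p0 i)) ∪ Set.range (fun i => Sum.inl (p1 i))
        Adj := fun x y =>
          (∃ j, x = Sum.inl (f j) ∧ y = Sum.inr j ∨ x = Sum.inr j ∧ y = Sum.inl (f j)) ∨
          (∃ i, x = Sum.inl (p0 i) ∧ y = Sum.inl (p1 i) ∨ x = Sum.inl (p1 i) ∧ y = Sum.inl (p0 i))
        adj_sub := by
          rintro x y (⟨j, ⟨rfl, rfl⟩ | ⟨rfl, rfl⟩⟩ | ⟨i, ⟨rfl, rfl⟩ | ⟨rfl, rfl⟩⟩) <;>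
            rw [cliquePendant, SimpleGraph.fromRel_adj]
          · exact ⟨by simp, Or.inl (Or.inr ⟨j, rfl, rfl⟩)⟩
          · exact ⟨by simp, Or.inr (Or.inr ⟨j, rfl, rfl⟩)⟩
          · exact ⟨by simpa using hp01 i i, Or.inl (Or.inl ⟨_, _, hp01 i i, rfl, rfl⟩)⟩
          · exact ⟨by simpa using (hp01 i i).symm, Or.inr (Or.inl ⟨_, _, hp01 i i, rfl, rfl⟩)⟩
        edge_vert := by
          rintro x y (⟨j, ⟨rfl, rfl⟩ | ⟨rfl, rfl⟩⟩ | ⟨i, ⟨rfl, rfl⟩ | ⟨rfl, rfl⟩⟩)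
          · exact Or.inl (Or.inl (Or.inl ⟨j, rfl⟩))
          · exact Or.inl (Or.inl (Or.inr ⟨j, rfl⟩))
          · exact Or.inl (Or.inr ⟨i, rfl⟩)
          · exact Or.inr ⟨i, rfl⟩
        symm := by
          constructor
          rintro x y (⟨j, h | h⟩ | ⟨i, h | h⟩)
          exacts [Or.inl ⟨j, Or.inr ⟨h.2, h.1⟩⟩, Or.inl ⟨j, Or.inl ⟨h.2, h.1⟩⟩,
            Or.inr ⟨i, Or.inr ⟨h.2, h.1⟩⟩, Or.inr ⟨i, Or.inl ⟨h.2, h.1⟩⟩] }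
    have hmatch : M.IsMatching := by
      rintro v (((⟨j, rfl⟩ | ⟨j, rfl⟩) | ⟨i, rfl⟩) | ⟨i, rfl⟩)
      · refine ⟨Sum.inr j, Or.inl ⟨j, Or.inl ⟨rfl, rfl⟩⟩, ?_⟩
        rintro w (⟨j', ⟨he, rfl⟩ | ⟨he, rfl⟩⟩ | ⟨i', ⟨he, rfl⟩ | ⟨he, rfl⟩⟩)
        · cases hf (Sum.inl.inj he); rfl
        · simp at he
        · exact absurd (Sum.inl.inj he) (hfp0 j i')
        · exact absurd (Sum.inl.inj he) (hfp1 j i')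
      · refine ⟨Sum.inl (f j), Or.inl ⟨j, Or.inr ⟨rfl, rfl⟩⟩, ?_⟩
        rintro w (⟨j', ⟨he, rfl⟩ | ⟨he, rfl⟩⟩ | ⟨i', ⟨he, rfl⟩ | ⟨he, rfl⟩⟩)
        · simp at he
        · cases Sum.inr.inj he; rfl
        · simp at he
        · simp at he
      · refine ⟨Sum.inl (p1 i), Or.inr ⟨i, Or.inl ⟨rfl, rfl⟩⟩, ?_⟩
        rintro w (⟨j', ⟨he, rfl⟩ | ⟨he, rfl⟩⟩ | ⟨i', ⟨he, rfl⟩ | ⟨he, rfl⟩⟩)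
        · exact absurd (Sum.inl.inj he).symm (hfp0 j' i)
        · simp at he
        · cases hp00 (Sum.inl.inj he); rfl
        · exact absurd (Sum.inl.inj he).symm (hp01 i i').symm
      · refine ⟨Sum.inl (p0 i), Or.inr ⟨i, Or.inr ⟨rfl, rfl⟩⟩, ?_⟩
        rintro w (⟨j', ⟨he, rfl⟩ | ⟨he, rfl⟩⟩ | ⟨i', ⟨he, rfl⟩ | ⟨he, rfl⟩⟩)
        · exact absurd (Sum.inl.inj he).symm (hfp1 j' i)
        · simp at he
        · exact absurd (Sum.inl.inj he) (hp01 i' i).symm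
        · cases hp11 (Sum.inl.inj he); rfl
    have hverts : M.verts.ncard = 2 * k + 2 * ((n - k) / 2) := by
      have dAB : Disjoint (Set.range (fun j : Fin k => (Sum.inl (f j) : Fin n ⊕ Fin k)))
          (Set.range (Sum.inr : Fin k → Fin n ⊕ Fin k)) := by
        rw [Set.disjoint_left]; rintro x ⟨j, rfl⟩ ⟨j', h⟩; simp at h
      have dABC : Disjoint (Set.range (fun j : Fin k => (Sum.inl (f j) : Fin n ⊕ Fin k)) ∪
          Set.range Sum.inr) (Set.range (fun i => (Sum.inl (p0 i) : Fin n ⊕ Fin k))) := by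
        rw [Set.disjoint_left]; rintro x (⟨j, rfl⟩ | ⟨j, rfl⟩) ⟨i, h⟩
        · exact hfp0 j i (Sum.inl.inj h).symm
        · simp at h
      have dABCD : Disjoint (Set.range (fun j : Fin k => (Sum.inl (f j) : Fin n ⊕ Fin k)) ∪
          Set.range Sum.inr ∪ Set.range (fun i => (Sum.inl (p0 i) : Fin n ⊕ Fin k)))
          (Set.range (fun i => (Sum.inl (p1 i) : Fin n ⊕ Fin k))) := by
        rw [Set.disjoint_left]; rintro x ((⟨j, rfl⟩ | ⟨j, rfl⟩) | ⟨i', rfl⟩) ⟨i, h⟩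
        · exact hfp1 j i (Sum.inl.inj h).symm
        · simp at h
        · exact hp01 i' i (Sum.inl.inj h).symm
      show (Set.range (fun j => Sum.inl (f j)) ∪ Set.range Sum.inr ∪
          Set.range (fun i => Sum.inl (p0 i)) ∪ Set.range (fun i => Sum.inl (p1 i))).ncard
          = 2 * k + 2 * ((n - k) / 2)
      rw [Set.ncard_union_eq dABCD (Set.toFinite _) (Set.toFinite _),
        Set.ncard_union_eq dABC (Set.toFinite _) (Set.toFinite _),
        Set.ncard_union_eq dAB (Set.toFinite _) (Set.toFinite _)]
      rw [← Set.image_univ, Set.ncard_image_of_injective Set.univ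
        (show Function.Injective (fun j : Fin k => (Sum.inl (f j) : Fin n ⊕ Fin k)) from
          Sum.inl_injective.comp hf)]
      rw [← Set.image_univ (f := Sum.inr), Set.ncard_image_of_injective _ Sum.inr_injective]
      rw [← Set.image_univ (f := fun i => Sum.inl (p0 i)), Set.ncard_image_of_injective Set.univ
        (show Function.Injective (fun i : Fin ((n - k) / 2) => (Sum.inl (p0 i) : Fin n ⊕ Fin k))
          from Sum.inl_injective.comp hp00)]
      rw [← Set.image_univ (f := fun i => Sum.inl (p1 i)), Set.ncard_image_of_injective Set.univ
        (show Function.Injective (fun i : Fin ((n - k) / 2) => (Sum.inl (p1 i) : Fin n ⊕ Fin k))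
          from Sum.inl_injective.comp hp11)]
      simp only [Set.ncard_univ, Nat.card_eq_fintype_card, Fintype.card_fin]
      omega
    have hcard := aux_card hmatch
    exact ⟨M, hmatch, by omega⟩
  · -- upper bound
    rintro m ⟨M, hM, rfl⟩
    have h1 := aux_card hM
    have h2 : M.verts.ncard ≤ n + k := by
      have := Set.ncard_le_ncard (Set.subset_univ M.verts) Set.finite_univ
      rwa [Set.ncard_univ, Nat.card_eq_fintype_card, Fintype.card_sum,
        Fintype.card_fin, Fintype.card_fin] at this
    omega
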